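/- arXiv:2604.13819 — 2 statements merged into one kernel-verified Lean document; each statement's English description precedes it below -/
import Mathlib

section
/- For t ∈ ℝ \ ℤ_{≥0} and all λ_1, λ_2 ∈ ℝ, the t-deformed binomial series form a semigroup under t-deformed convolution: B_{λ_1}^{(t)} ⊞^t B_{λ_2}^{(t)} = B_{λ_1+λ_2}^{(t)}. -/
open PowerSeries Finset

/-- Falling factorial `(t)_k = t (t-1) ⋯ (t-k+1)`. -/
noncomputable def ffall (t : ℝ) (k : ℕ) : ℝ := ∏ i ∈ Finset.range k, (t - i)

/-- The `t`-deformed convolution of formal power series. -/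
noncomputable def tconv (t : ℝ) (A B : PowerSeries ℝ) : PowerSeries ℝ :=
  PowerSeries.mk fun k => ∑ p ∈ Finset.HasAntidiagonal.antidiagonal k,
    ffall t k / (ffall t p.1 * ffall t p.2)
      * (PowerSeries.coeff (R := ℝ) p.1 A) * (PowerSeries.coeff (R := ℝ) p.2 B)

/-- Formal logarithm of a power series (with constant term 1):
`log A = - Σ_{k ≥ 1} (1 - A)^k / k`. -/
noncomputable def flog (A : PowerSeries ℝ) : PowerSeries ℝ :=
  PowerSeries.mk fun n =>
    -∑ k ∈ Finset.range (n + 1), (PowerSeries.coeff (R := ℝ) n ((1 - A) ^ k)) / k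

/-- Power sums of `A ∈ 1 + zℝ⟦z⟧`, defined by `Σ p_k(A) z^k = -z (d/dz) log A(z)`. -/
noncomputable def powSum (A : PowerSeries ℝ) (k : ℕ) : ℝ :=
  -(k : ℝ) * PowerSeries.coeff (R := ℝ) k (flog A)

/-- `E^t[A](z) = Σ_k (t^k/(t)_k) a_k z^k`. -/
noncomputable def Et (t : ℝ) (A : PowerSeries ℝ) : PowerSeries ℝ :=
  PowerSeries.mk fun k => t ^ k / ffall t k * PowerSeries.coeff (R := ℝ) k A

/-- The `t`-deformed cumulant transform `C^t[A](z) = -(z/t)(d/dz) log(E^t[A](z))`. -/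
noncomputable def Ct (t : ℝ) (A : PowerSeries ℝ) : PowerSeries ℝ :=
  PowerSeries.mk fun n => -(1 / t) * ((n : ℝ) * PowerSeries.coeff (R := ℝ) n (flog (Et t A)))

/-- The `i`-th `t`-deformed cumulant of `A`. -/
noncomputable def kappa (t : ℝ) (A : PowerSeries ℝ) (i : ℕ) : ℝ :=
  PowerSeries.coeff (R := ℝ) i (Ct t A)

/-- The `t`-deformed binomial series `B_λ^{(t)}(z) = (1-λz)^t`. -/
noncomputable def Bt (t lam : ℝ) : PowerSeries ℝ :=
  PowerSeries.mk fun k => (-1) ^ k * ffall t k / (k.factorial : ℝ) * lam ^ k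

/-- Semigroup property of the binomial series under `⊞^t`:
`B_{λ₁}^{(t)} ⊞^t B_{λ₂}^{(t)} = B_{λ₁+λ₂}^{(t)}`. -/
theorem Bt_tconv (t : ℝ) (ht : ∀ n : ℕ, t ≠ (n : ℝ)) (lam₁ lam₂ : ℝ) :
    tconv t (Bt t lam₁) (Bt t lam₂) = Bt t (lam₁ + lam₂) := by
  have hff : ∀ k : ℕ, ffall t k ≠ 0 := fun k =>
    Finset.prod_ne_zero_iff.mpr fun i _ => sub_ne_zero.mpr (ht i)
  ext k
  simp only [tconv, Bt, coeff_mk]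
  rw [Finset.Nat.sum_antidiagonal_eq_sum_range_succ
    (fun i j => ffall t k / (ffall t i * ffall t j)
      * ((-1 : ℝ) ^ i * ffall t i / (i.factorial : ℝ) * lam₁ ^ i)
      * ((-1 : ℝ) ^ j * ffall t j / (j.factorial : ℝ) * lam₂ ^ j)),
    add_pow, Finset.mul_sum]
  refine Finset.sum_congr rfl fun i hi => ?_
  have hik : i ≤ k := Nat.lt_succ_iff.mp (Finset.mem_range.mp hi)
  have hneg : (-1 : ℝ) ^ i * (-1 : ℝ) ^ (k - i) = (-1 : ℝ) ^ k := by
    rw [← pow_add, Nat.add_sub_cancel' hik]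
  have hfac : (i.factorial : ℝ) ≠ 0 := Nat.cast_ne_zero.mpr i.factorial_ne_zero
  have hfac2 : ((k - i).factorial : ℝ) ≠ 0 := Nat.cast_ne_zero.mpr (k - i).factorial_ne_zero
  have hchoose : (k.choose i : ℝ) = (k.factorial : ℝ) / (i.factorial * (k - i).factorial) := by
    rw [Nat.cast_choose ℝ hik]
  rw [hchoose]
  field_simp [hff i, hff (k - i), hff k]
  rw [← hneg]
  ring
end

section
/- For t ∈ ℝ \ ℤ_{≥0}, define H_s^{(t)} := D_{√s}[H^{(t)}] for s ≥ 0, where D_r[A](z) := A(rz) denotes dilation. Then for all s_1, s_2 ≥ 0, one has H_{s_1}^{(t)} ⊞^t H_{s_2}^{(t)} = H_{s_1+s_2}^{(t)}. -/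
open PowerSeries Finset

/-- The `t`-deformed Hermite series. -/
noncomputable def Ht (t : ℝ) : PowerSeries ℝ :=
  PowerSeries.mk fun n =>
    if Even n then
      (-1) ^ (n / 2) * ffall t n / (t ^ (n / 2) * (2 ^ (n / 2) * ((n / 2).factorial : ℝ)))
    else 0

lemma ffall_ne_zero (t : ℝ) (ht : ∀ n : ℕ, t ≠ (n : ℝ)) (k : ℕ) : ffall t k ≠ 0 :=
  Finset.prod_ne_zero_iff.2 fun i _ => sub_ne_zero.2 (ht i)

lemma coeff_Ht_even (t : ℝ) (k : ℕ) :
    PowerSeries.coeff (R := ℝ) (2 * k) (Ht t) =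
      (-1) ^ k * ffall t (2 * k) / (t ^ k * (2 ^ k * (k.factorial : ℝ))) := by
  have h : (2 * k) / 2 = k := by omega
  simp [Ht, h]

lemma coeff_Ht_odd (t : ℝ) {n : ℕ} (hn : ¬ Even n) :
    PowerSeries.coeff (R := ℝ) n (Ht t) = 0 := by
  simp [Ht, hn]

/-- With `H_s^{(t)} := D_{√s}[H^{(t)}]`, one has
`H_{s₁}^{(t)} ⊞^t H_{s₂}^{(t)} = H_{s₁+s₂}^{(t)}` for all `s₁, s₂ ≥ 0`. -/
theorem Ht_tconv (t : ℝ) (ht : ∀ n : ℕ, t ≠ (n : ℝ)) (s₁ s₂ : ℝ)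
    (hs₁ : 0 ≤ s₁) (hs₂ : 0 ≤ s₂) :
    tconv t (PowerSeries.rescale (Real.sqrt s₁) (Ht t))
        (PowerSeries.rescale (Real.sqrt s₂) (Ht t)) =
      PowerSeries.rescale (Real.sqrt (s₁ + s₂)) (Ht t) := by
  have hff := ffall_ne_zero t ht
  have ht0 : t ≠ 0 := by simpa using ht 0
  have hsq : ∀ s : ℝ, 0 ≤ s → ∀ m : ℕ, (Real.sqrt s) ^ (2 * m) = s ^ m := by
    intro s hs m
    rw [pow_mul, Real.sq_sqrt hs]
  ext n
  rw [tconv, PowerSeries.coeff_mk, PowerSeries.coeff_rescale]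
  by_cases hn : Even n
  · obtain ⟨k, hk⟩ := hn
    have hk2 : n = 2 * k := by omega
    subst hk2
    rw [Finset.Nat.sum_antidiagonal_eq_sum_range_succ_mk]
    have hsub : (Finset.range (k + 1)).image (fun a => 2 * a) ⊆ Finset.range (2 * k + 1) := by
      intro x hx
      obtain ⟨a, ha, rfl⟩ := Finset.mem_image.1 hx
      simp only [Finset.mem_range] at ha ⊢
      omega
    rw [← Finset.sum_subset hsub (by
      intro x hx hximg
      have hodd : ¬ Even x := by
        rintro ⟨a, ha⟩
        exact hximg (Finset.mem_image.2 ⟨a, Finset.mem_range.2 (by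
          simp only [Finset.mem_range] at hx; omega), by omega⟩)
      rw [PowerSeries.coeff_rescale, coeff_Ht_odd t hodd]
      ring)]
    rw [Finset.sum_image (by intro a _ b _ h; simp only at h; omega)]
    rw [coeff_Ht_even, hsq _ (by positivity) k]
    rw [add_pow]
    rw [Finset.sum_mul]
    refine Finset.sum_congr rfl ?_
    intro a ha
    have hak : a ≤ k := by simp only [Finset.mem_range] at ha; omega
    obtain ⟨b, rfl⟩ : ∃ b, k = a + b := ⟨k - a, by omega⟩
    have h1 : 2 * (a + b) - 2 * a = 2 * b := by omega
    have h2 : a + b - a = b := by omega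
    rw [h1, PowerSeries.coeff_rescale, PowerSeries.coeff_rescale, coeff_Ht_even,
      coeff_Ht_even, hsq s₁ hs₁ a, hsq s₂ hs₂ b, h2, Nat.cast_choose ℝ hak, h2]
    have hfa : (a.factorial : ℝ) ≠ 0 := Nat.cast_ne_zero.2 a.factorial_ne_zero
    have hfb : (b.factorial : ℝ) ≠ 0 := Nat.cast_ne_zero.2 b.factorial_ne_zero
    have hfab : ((a + b).factorial : ℝ) ≠ 0 := Nat.cast_ne_zero.2 (a + b).factorial_ne_zero
    have h2a : (2 : ℝ) ^ a ≠ 0 := by positivity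
    have h2b : (2 : ℝ) ^ b ≠ 0 := by positivity
    have hta : t ^ a ≠ 0 := pow_ne_zero _ ht0
    have htb : t ^ b ≠ 0 := pow_ne_zero _ ht0
    rw [pow_add, pow_add, pow_add]
    field_simp
    rw [div_eq_iff (mul_ne_zero (hff _) (hff _))]
    ring
  · rw [coeff_Ht_odd t hn, mul_zero]
    refine Finset.sum_eq_zero fun p hp => ?_
    have hpn : p.1 + p.2 = n := Finset.HasAntidiagonal.mem_antidiagonal.1 hp
    rcases Nat.even_or_odd p.1 with h1 | h1
    · have h2 : ¬ Even p.2 := by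
        rintro ⟨y, hy⟩
        obtain ⟨x, hx⟩ := h1
        exact hn ⟨x + y, by omega⟩
      rw [PowerSeries.coeff_rescale, PowerSeries.coeff_rescale, coeff_Ht_odd t h2]
      ring
    · rw [PowerSeries.coeff_rescale, coeff_Ht_odd t (Nat.not_even_iff_odd.2 h1)]
      ring
end
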